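/- Let ν be a finite Borel measure on ℝ supported in [0, r₀] for some r₀ > 0, and let λ ∈ (0,1). Then for Lebesgue-almost every r ∈ [0, r₀], the series ∑_{j=0}^∞ ν([r − λ^j, r + λ^j]) converges. -/

import Mathlib

open MeasureTheory

lemma aux_meas_set (c : ℝ) :
    MeasurableSet {p : ℝ × ℝ | p.2 ∈ Set.Icc (p.1 - c) (p.1 + c)} := by
  apply MeasurableSet.inter
  · exact measurableSet_le (f := fun p : ℝ × ℝ => p.1 - c) (g := fun p : ℝ × ℝ => p.2) (by fun_prop) (by fun_prop)
  · exact measurableSet_le (f := fun p : ℝ × ℝ => p.2) (g := fun p : ℝ × ℝ => p.1 + c) (by fun_prop) (by fun_prop)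

lemma aux_mem_iff (c r x : ℝ) :
    x ∈ Set.Icc (r - c) (r + c) ↔ r ∈ Set.Icc (x - c) (x + c) := by
  simp only [Set.mem_Icc]; constructor <;> (intro h; constructor <;> linarith [h.1, h.2])

lemma aux_meas (ν : Measure ℝ) [SFinite ν] (c : ℝ) :
    Measurable fun r : ℝ => ν (Set.Icc (r - c) (r + c)) := by
  exact measurable_measure_prodMk_left (ν := ν) (aux_meas_set c)

lemma aux_int (ν : Measure ℝ) [IsFiniteMeasure ν] (c : ℝ) (hc : 0 ≤ c) :
    ∫⁻ r, ν (Set.Icc (r - c) (r + c)) ∂volume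
      = ENNReal.ofReal (2 * c) * ν Set.univ := by
  have h1 : ∀ r : ℝ, ν (Set.Icc (r - c) (r + c))
      = ∫⁻ x, ({p : ℝ × ℝ | p.2 ∈ Set.Icc (p.1 - c) (p.1 + c)}).indicator 1 (r, x) ∂ν := by
    intro r
    rw [← lintegral_indicator_one (measurableSet_Icc : MeasurableSet (Set.Icc (r - c) (r + c)))]
    congr 1
  simp_rw [h1]
  rw [lintegral_lintegral_swap
    (show Measurable (Function.uncurry fun r x =>
        ({p : ℝ × ℝ | p.2 ∈ Set.Icc (p.1 - c) (p.1 + c)}).indicator (1 : ℝ × ℝ → ENNReal) (r, x))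
      from measurable_one.indicator (aux_meas_set c)).aemeasurable]
  have h2 : ∀ x : ℝ, ∫⁻ r, ({p : ℝ × ℝ | p.2 ∈ Set.Icc (p.1 - c) (p.1 + c)}).indicator 1 (r, x) ∂volume
      = ENNReal.ofReal (2 * c) := by
    intro x
    have heq : (fun r => ({p : ℝ × ℝ | p.2 ∈ Set.Icc (p.1 - c) (p.1 + c)}).indicator (1 : ℝ × ℝ → ENNReal) (r, x))
        = (Set.Icc (x - c) (x + c)).indicator 1 := by
      ext r
      by_cases h : r ∈ Set.Icc (x - c) (x + c)
      · rw [Set.indicator_of_mem h,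
          Set.indicator_of_mem (show (r, x) ∈ {p : ℝ × ℝ | p.2 ∈ Set.Icc (p.1 - c) (p.1 + c)} from (aux_mem_iff c r x).mpr h)]
        rfl
      · rw [Set.indicator_of_notMem h,
          Set.indicator_of_notMem (show (r, x) ∉ {p : ℝ × ℝ | p.2 ∈ Set.Icc (p.1 - c) (p.1 + c)} from
            fun hm => h ((aux_mem_iff c r x).mp hm))]
    rw [heq, lintegral_indicator_one measurableSet_Icc, Real.volume_Icc]
    ring_nf
  simp_rw [h2]
  rw [lintegral_const]

theorem statement3 (ν : Measure ℝ) [IsFiniteMeasure ν] (r₀ : ℝ) (hr₀ : 0 < r₀)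
    (hsupp : ν (Set.Icc 0 r₀)ᶜ = 0) (l : ℝ) (hl : l ∈ Set.Ioo (0 : ℝ) 1) :
    ∀ᵐ r ∂(volume.restrict (Set.Icc 0 r₀)),
      ∑' j : ℕ, ν (Set.Icc (r - l ^ j) (r + l ^ j)) < ⊤ := by
  obtain ⟨hl0, hl1⟩ := hl
  have hmeas : Measurable fun r : ℝ => ∑' j : ℕ, ν (Set.Icc (r - l ^ j) (r + l ^ j)) :=
    Measurable.ennreal_tsum fun j => aux_meas ν (l ^ j)
  apply ae_lt_top hmeas
  rw [lintegral_tsum fun j => (aux_meas ν (l ^ j)).aemeasurable]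
  have hbound : ∀ j : ℕ, ∫⁻ r in Set.Icc 0 r₀, ν (Set.Icc (r - l ^ j) (r + l ^ j)) ∂volume
      ≤ ENNReal.ofReal 2 * ν Set.univ * ENNReal.ofReal l ^ j := by
    intro j
    calc ∫⁻ r in Set.Icc 0 r₀, ν (Set.Icc (r - l ^ j) (r + l ^ j)) ∂volume
        ≤ ∫⁻ r, ν (Set.Icc (r - l ^ j) (r + l ^ j)) ∂volume :=
          setLIntegral_le_lintegral _ _
      _ = ENNReal.ofReal (2 * l ^ j) * ν Set.univ :=
          aux_int ν (l ^ j) (pow_nonneg hl0.le j)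
      _ = ENNReal.ofReal 2 * ENNReal.ofReal (l ^ j) * ν Set.univ := by
          rw [ENNReal.ofReal_mul (by norm_num)]
      _ = ENNReal.ofReal 2 * ν Set.univ * ENNReal.ofReal l ^ j := by
          rw [ENNReal.ofReal_pow hl0.le]; ring
  have hle : ∑' j : ℕ, ∫⁻ r in Set.Icc 0 r₀, ν (Set.Icc (r - l ^ j) (r + l ^ j)) ∂volume
      ≤ ENNReal.ofReal 2 * ν Set.univ * ∑' j : ℕ, ENNReal.ofReal l ^ j := by
    rw [← ENNReal.tsum_mul_left]
    exact ENNReal.tsum_le_tsum hbound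
  refine ne_top_of_le_ne_top ?_ hle
  rw [ENNReal.tsum_geometric]
  apply ENNReal.mul_ne_top
  · exact ENNReal.mul_ne_top ENNReal.ofReal_ne_top (measure_ne_top ν _)
  · rw [Ne, ENNReal.inv_eq_top, tsub_eq_zero_iff_le]
    exact fun h => absurd (ENNReal.one_le_ofReal.mp h) (not_le.mpr hl1)
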